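/- Let 𝔽 be a field. Let φ = (φ_0,…,φ_ε) be a basis of the space of polynomials of degree at most ε and ψ = (ψ_0,…,ψ_η) a basis of the space of polynomials of degree at most η, admitting dual bases L_{ε,φ}(λ) ∈ 𝔽[λ]^{ε×(ε+1)} and L_{η,ψ}(λ) ∈ 𝔽[λ]^{η×(η+1)}. Let p, q ∈ 𝔽^{ε+1} and r, s ∈ 𝔽^{η+1} be coefficient vectors, and set p(λ) := pᵀ·π_{ε,φ}(λ), q(λ) := qᵀ·π_{ε,φ}(λ), r(λ) := rᵀ·π_{η,ψ}(λ), s(λ) := sᵀ·π_{η,ψ}(λ). Then the square matrix pencil ℒ(λ) := [[p·sᵀ + q·rᵀ, L_{ε,φ}(λ)ᵀ],[L_{η,ψ}(λ), 0]] of size ε+η+1 is a linearization for the scalar polynomial t(λ) := p(λ)·s(λ) + q(λ)·r(λ). -/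

import Mathlib

open Polynomial Matrix

namespace PaperLin

variable {F : Type*} [Field F]

/-- A square matrix polynomial is *unimodular* if its determinant is a
nonzero constant of the field. -/
def Unimodular {ι : Type*} [Fintype ι] [DecidableEq ι]
    (E : Matrix ι ι (Polynomial F)) : Prop :=
  ∃ c : F, c ≠ 0 ∧ E.det = Polynomial.C c

/-- `L` is a linearization of `P`: `L` is extended unimodularly equivalent to
`P`, i.e. `E(λ) ⬝ diag(I_r, L(λ)) ⬝ G(λ) = diag(I_s, P(λ))` for some unimodular
`E`, `G` (up to bijections of the index sets). -/
def IsLinearization {ι₁ ι₂ κ : Type*} [Fintype ι₁] [DecidableEq ι₁]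
    [Fintype ι₂] [DecidableEq ι₂] [Fintype κ] [DecidableEq κ]
    (L : Matrix ι₁ ι₂ (Polynomial F)) (P : Matrix κ κ (Polynomial F)) : Prop :=
  ∃ (r s : ℕ)
    (E : Matrix (Fin r ⊕ ι₁) (Fin r ⊕ ι₁) (Polynomial F))
    (G : Matrix (Fin r ⊕ ι₂) (Fin r ⊕ ι₂) (Polynomial F))
    (e₁ : (Fin r ⊕ ι₁) ≃ (Fin s ⊕ κ)) (e₂ : (Fin r ⊕ ι₂) ≃ (Fin s ⊕ κ)),
    Unimodular E ∧ Unimodular G ∧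
    E * (Matrix.fromBlocks 1 0 0 L : Matrix (Fin r ⊕ ι₁) (Fin r ⊕ ι₂) (Polynomial F)) * G =
      Matrix.reindex e₁.symm e₂.symm (Matrix.fromBlocks 1 0 0 P)

/-- The `k × (k+1)` matrix pencil `L` is a (full row-rank, linear) dual basis
for the polynomial vector `π`: its entries have degree at most 1,
`L(λ)·π(λ) = 0` identically, and `L(λ₀)` has rank `k` for every `λ₀ ∈ F`. -/
def IsDualBasis {k : ℕ} (L : Matrix (Fin k) (Fin (k + 1)) (Polynomial F))
    (π : Fin (k + 1) → Polynomial F) : Prop :=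
  (∀ i j, (L i j).degree ≤ 1) ∧
  L.mulVec π = 0 ∧
  ∀ x : F, (L.map (Polynomial.eval x)).rank = k

lemma span_facts {k : ℕ} (π : Fin (k+1) → Polynomial F)
    (hdeg : ∀ i, (π i).degree ≤ (k : ℕ)) (hind : LinearIndependent F π) :
    (∃ w : Fin (k+1) → F, ∑ i, C (w i) * π i = 1) ∧ ∃ j, (π j).degree = (k : ℕ) := by
  set V := degreeLT F (k+1) with hV
  have hmem : ∀ i, π i ∈ V := fun i => by
    rw [hV, mem_degreeLT]
    exact (hdeg i).trans_lt (by exact_mod_cast lt_add_one k)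
  set π' : Fin (k+1) → V := fun i => ⟨π i, hmem i⟩ with hπ'
  have hind' : LinearIndependent F π' := by
    apply LinearIndependent.of_comp V.subtype
    exact hind
  haveI : Module.Finite F V := Module.Finite.equiv (degreeLTEquiv F (k+1)).symm
  have hfr : Module.finrank F V = k + 1 := by
    rw [LinearEquiv.finrank_eq (degreeLTEquiv F (k+1)), Module.finrank_fin_fun]
  have hcard : Fintype.card (Fin (k+1)) = Module.finrank F V := by
    rw [Fintype.card_fin, hfr]
  let b := basisOfLinearIndependentOfCardEqFinrank hind' hcard
  have hb : ∀ i, b i = π' i := fun i => by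
    simp [b, coe_basisOfLinearIndependentOfCardEqFinrank]
  -- representation of arbitrary element of V
  have hrep : ∀ v : V, ∃ c : Fin (k+1) → F, ∑ i, c i • π i = (v : Polynomial F) := by
    intro v
    refine ⟨b.repr v, ?_⟩
    have := b.sum_repr v
    simp_rw [hb] at this
    have := congrArg (Subtype.val) this
    rw [← this]
    push_cast [hπ']
    rfl
  constructor
  · have h1 : (1 : Polynomial F) ∈ V := by
      rw [hV, mem_degreeLT, degree_one]
      exact_mod_cast Nat.succ_pos k
    obtain ⟨c, hc⟩ := hrep ⟨1, h1⟩
    exact ⟨c, by simpa [smul_eq_C_mul] using hc⟩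
  · by_contra hcon
    push_neg at hcon
    have hXk : (X ^ k : Polynomial F) ∈ V := by
      rw [hV, mem_degreeLT, degree_X_pow]
      exact_mod_cast lt_add_one k
    obtain ⟨c, hc⟩ := hrep ⟨X ^ k, hXk⟩
    have hmem' : ∀ i, π i ∈ degreeLT F k := fun i => by
      rw [mem_degreeLT]
      exact lt_of_le_of_ne (hdeg i) (hcon i)
    have : (X ^ k : Polynomial F) ∈ degreeLT F k := by
      rw [show ((X ^ k : Polynomial F)) = ((⟨X ^ k, hXk⟩ : V) : Polynomial F) from rfl, ← hc]
      exact Submodule.sum_mem _ fun i _ => Submodule.smul_mem _ _ (hmem' i)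
    rw [mem_degreeLT, degree_X_pow] at this
    exact absurd this (lt_irrefl _)

lemma degree_det_le' {n : ℕ} (A : Matrix (Fin n) (Fin n) (Polynomial F))
    (h : ∀ i j, (A i j).degree ≤ 1) : A.det.degree ≤ (n : ℕ) := by
  rw [Matrix.det_apply']
  refine (degree_sum_le _ _).trans (Finset.sup_le fun σ _ => ?_)
  refine (degree_mul_le _ _).trans ?_
  have h2 : degree ((Equiv.Perm.sign σ : ℤ) : Polynomial F) ≤ 0 := degree_intCast_le _
  have h3 : (∏ i, A (σ i) i).degree ≤ (n : ℕ) := by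
    refine (degree_prod_le _ _).trans ?_
    calc ∑ i : Fin n, (A (σ i) i).degree ≤ ∑ _i : Fin n, (1 : WithBot ℕ) :=
          Finset.sum_le_sum fun i _ => h (σ i) i
      _ = (n : ℕ) := by simp [Finset.sum_const]
  calc degree _ + degree _ ≤ 0 + (n:ℕ) := add_le_add h2 h3
    _ = (n : ℕ) := by rw [zero_add]


lemma rank_lt_of_vecMul_eq_zero {a b : ℕ} (A : Matrix (Fin a) (Fin b) F)
    {v : Fin a → F} (hv : v ≠ 0) (h : Matrix.vecMul v A = 0) : A.rank < a := by
  rw [← Matrix.rank_transpose]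
  have hker : v ∈ LinearMap.ker (Aᵀ.mulVecLin) := by
    rw [LinearMap.mem_ker, Matrix.mulVecLin_apply, Matrix.mulVec_transpose]
    exact h
  have h1 : 0 < Module.finrank F (LinearMap.ker Aᵀ.mulVecLin) := by
    rw [Module.finrank_pos_iff_exists_ne_zero]
    exact ⟨⟨v, hker⟩, by simpa using hv⟩
  have h2 := LinearMap.finrank_range_add_finrank_ker (Aᵀ.mulVecLin)
  rw [Module.finrank_fin_fun] at h2
  rw [Matrix.rank]
  omega



lemma dual_basis_completion {k : ℕ} (L : Matrix (Fin k) (Fin (k+1)) (Polynomial F))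
    (π : Fin (k+1) → Polynomial F)
    (hdegL : ∀ i j, (L i j).degree ≤ 1)
    (hker : L.mulVec π = 0)
    (hrank : (L.map (Polynomial.eval (0:F))).rank = k)
    (hdegπ : ∀ i, (π i).degree ≤ (k:ℕ))
    (hind : LinearIndependent F π) :
    ∃ U : Matrix (Fin (k+1)) (Fin (k+1)) (Polynomial F),
      Unimodular U ∧ (∀ i : Fin k, U (Fin.castSucc i) = L i) ∧
      U.mulVec π = (fun i => if i = Fin.last k then 1 else 0) := by
  obtain ⟨⟨w, hw⟩, ⟨j0, hj0⟩⟩ := span_facts π hdegπ hind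
  set m : Fin (k+1) → Polynomial F :=
    fun j => (-1 : Polynomial F) ^ (k + (j:ℕ)) * det (L.submatrix id j.succAbove) with hm
  have hPhi : ∀ v : Fin (k+1) → Polynomial F,
      det (Matrix.of (Fin.snoc L v)) = ∑ j, v j * m j := by
    intro v
    rw [Matrix.det_succ_row _ (Fin.last k)]
    refine Finset.sum_congr rfl fun j _ => ?_
    have h1 : (Matrix.of (Fin.snoc L v)) (Fin.last k) j = v j := by
      simp [Fin.snoc]
    have h2 : ((Matrix.of (Fin.snoc L v)).submatrix (Fin.last k).succAbove j.succAbove)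
        = L.submatrix id j.succAbove := by
      ext r c
      simp [Fin.succAbove_last, Fin.snoc]
    rw [h1, h2, hm, Fin.val_last]
    ring
  have hdet0 : ∀ v : Fin (k+1) → Polynomial F, (∑ j, v j * π j = 0) →
      det (Matrix.of (Fin.snoc L v)) = 0 := by
    intro v hv
    set A := Matrix.of (Fin.snoc L v) with hA
    have hmv : A.mulVec π = 0 := by
      funext i
      refine Fin.lastCases ?_ (fun r => ?_) i
      · show ∑ j, A (Fin.last k) j * π j = 0
        simpa [hA, Fin.snoc] using hv
      · have := congrFun hker r
        simp only [Matrix.mulVec, dotProduct, Pi.zero_apply] at this ⊢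
        simpa [hA, Fin.snoc] using this
    have h2 : A.det • π = 0 := by
      calc A.det • π = (A.det • (1 : Matrix (Fin (k+1)) (Fin (k+1)) (Polynomial F))) *ᵥ π := by
            rw [Matrix.smul_mulVec, Matrix.one_mulVec]
        _ = (A.adjugate * A) *ᵥ π := by rw [Matrix.adjugate_mul]
        _ = A.adjugate *ᵥ (A *ᵥ π) := by rw [← Matrix.mulVec_mulVec]
        _ = 0 := by rw [hmv, Matrix.mulVec_zero]
    have hπ0 : π 0 ≠ 0 := hind.ne_zero 0
    have := congrFun h2 0
    simp only [Pi.smul_apply, smul_eq_mul, Pi.zero_apply] at this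
    rcases mul_eq_zero.mp this with h | h
    · exact h
    · exact absurd h hπ0
  have hcross : ∀ i j, π i * m j = π j * m i := by
    intro i j
    have h := hdet0 (fun c => π i * (if c = j then 1 else 0) - π j * (if c = i then 1 else 0)) ?_
    · rw [hPhi] at h
      have heq : ∑ c, (π i * (if c = j then 1 else 0) - π j * (if c = i then 1 else 0)) * m c
          = π i * m j - π j * m i := by
        simp [sub_mul, Finset.sum_sub_distrib, ite_mul, mul_assoc, Finset.sum_ite_eq']
      rw [heq] at h
      exact sub_eq_zero.mp h
    · simp [sub_mul, Finset.sum_sub_distrib, ite_mul, mul_assoc, Finset.sum_ite_eq']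
      ring
  -- the completed matrix
  set U : Matrix (Fin (k+1)) (Fin (k+1)) (Polynomial F) :=
    Matrix.of (Fin.snoc L (fun j => C (w j))) with hU
  have hUdet : U.det = ∑ c, C (w c) * m c := hPhi _
  have hUrows : ∀ i : Fin k, U (Fin.castSucc i) = L i := by
    intro i
    show (Fin.snoc L (fun j => C (w j)) : Fin (k+1) → Fin (k+1) → Polynomial F)
      (Fin.castSucc i) = L i
    exact Fin.snoc_castSucc _ _ _
  have hUπ : U.mulVec π = (fun i => if i = Fin.last k then 1 else 0) := by
    funext i
    refine Fin.lastCases ?_ (fun r => ?_) i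
    · show ∑ j, U (Fin.last k) j * π j = _
      have : ∀ j, U (Fin.last k) j = C (w j) := fun j => by
        show (Fin.snoc L (fun j => C (w j)) : Fin (k+1) → Fin (k+1) → Polynomial F)
          (Fin.last k) j = C (w j)
        simp [Fin.snoc]
      simp only [this, hw]
      simp
    · show ∑ j, U (Fin.castSucc r) j * π j = _
      have h0 := congrFun hker r
      simp only [Matrix.mulVec, dotProduct, Pi.zero_apply] at h0
      rw [if_neg (Fin.castSucc_lt_last r).ne]
      simp only [hUrows r]
      exact h0
  -- m j = U.det * π j
  have hmj : ∀ j, m j = U.det * π j := by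
    intro j
    have h1 : m j * (∑ i, C (w i) * π i) = U.det * π j := by
      rw [Finset.mul_sum, hUdet, Finset.sum_mul]
      refine Finset.sum_congr rfl fun i _ => ?_
      calc m j * (C (w i) * π i) = C (w i) * (π i * m j) := by ring
        _ = C (w i) * (π j * m i) := by rw [hcross i j]
        _ = C (w i) * m i * π j := by ring
    calc m j = m j * 1 := (mul_one _).symm
      _ = U.det * π j := by rw [← hw]; exact h1
  -- nonvanishing of the determinant
  have hUd0 : U.det ≠ 0 := by
    intro h0
    have hdm : (U.map (Polynomial.eval (0:F))).det = 0 := by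
      have : (U.map (Polynomial.eval (0:F))).det = Polynomial.eval 0 U.det := by
        rw [← Polynomial.coe_evalRingHom, ← RingHom.mapMatrix_apply, ← RingHom.map_det]
      rw [this, h0, Polynomial.eval_zero]
    obtain ⟨v, hvne, hv⟩ := Matrix.exists_vecMul_eq_zero_iff.mpr hdm
    set u := U.map (Polynomial.eval (0:F)) with hu
    have hup : u *ᵥ (fun j => Polynomial.eval 0 (π j)) =
        (fun i : Fin (k+1) => if i = Fin.last k then (1:F) else 0) := by
      funext i
      have : (u *ᵥ (fun j => Polynomial.eval 0 (π j))) i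
          = Polynomial.eval 0 ((U *ᵥ π) i) := by
        simp [hu, Matrix.mulVec, dotProduct, Polynomial.eval_finset_sum]
      rw [this, hUπ]
      by_cases hi : i = Fin.last k <;> simp [hi]
    have hvlast : v (Fin.last k) = 0 := by
      have h1 : v ⬝ᵥ (u *ᵥ fun j => Polynomial.eval 0 (π j)) = 0 := by
        rw [dotProduct_mulVec, hv, zero_dotProduct]
      rw [hup] at h1
      simpa [dotProduct] using h1
    have hv' : Matrix.vecMul (fun r : Fin k => v (Fin.castSucc r)) (L.map (Polynomial.eval (0:F))) = 0 := by
      funext j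
      have h1 := congrFun hv j
      simp only [Matrix.vecMul, dotProduct, Pi.zero_apply] at h1 ⊢
      rw [Fin.sum_univ_castSucc, hvlast] at h1
      simp only [zero_mul, add_zero] at h1
      have h2 : ∀ r : Fin k, v (Fin.castSucc r) * (L.map (Polynomial.eval (0:F))) r j
          = v (Fin.castSucc r) * u (Fin.castSucc r) j := fun r => by
        rw [hu]
        simp only [Matrix.map_apply, hUrows r]
      simp only [h2]
      exact h1
    have hvne' : (fun r : Fin k => v (Fin.castSucc r)) ≠ 0 := by
      intro hz
      apply hvne
      funext i
      refine Fin.lastCases ?_ (fun r => ?_) i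
      · exact hvlast
      · exact congrFun hz r
    have := rank_lt_of_vecMul_eq_zero (L.map (Polynomial.eval (0:F))) hvne' hv'
    omega
  -- degree bound: U.det is a nonzero constant
  have hdegm : (m j0).degree ≤ (k : ℕ) := by
    rw [hm]
    refine (degree_mul_le _ _).trans ?_
    have h1 : ((-1 : Polynomial F) ^ (k + (j0:ℕ))).degree ≤ 0 := by
      rw [← Polynomial.C_1, ← Polynomial.C_neg, ← Polynomial.C_pow]
      exact Polynomial.degree_C_le
    have h2 : (det (L.submatrix id j0.succAbove)).degree ≤ (k : ℕ) :=
      degree_det_le' _ (fun i j => hdegL i _)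
    calc ((-1 : Polynomial F) ^ (k + (j0:ℕ))).degree + (det (L.submatrix id j0.succAbove)).degree
          ≤ 0 + ((k:ℕ) : WithBot ℕ) := add_le_add h1 h2
      _ = ((k : ℕ) : WithBot ℕ) := zero_add _
  have hdegU : U.det.degree ≤ 0 := by
    have h1 : (m j0).degree = U.det.degree + (π j0).degree := by
      rw [hmj j0, Polynomial.degree_mul]
    rw [h1, hj0] at hdegm
    rcases Polynomial.degree_eq_natDegree hUd0 with h2
    rw [h2] at hdegm ⊢
    have : ((U.det.natDegree + k : ℕ) : WithBot ℕ) ≤ ((k : ℕ) : WithBot ℕ) := by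
      exact_mod_cast hdegm
    have : U.det.natDegree + k ≤ k := by exact_mod_cast this
    have : U.det.natDegree = 0 := by omega
    simp [this]
  refine ⟨U, ⟨U.det.coeff 0, ?_, ?_⟩, hUrows, hUπ⟩
  · intro hc
    apply hUd0
    rw [Polynomial.eq_C_of_degree_le_zero hdegU, hc, Polynomial.C_0]
  · exact Polynomial.eq_C_of_degree_le_zero hdegU


lemma unimodular_one {ι : Type*} [Fintype ι] [DecidableEq ι] :
    Unimodular (1 : Matrix ι ι (Polynomial F)) := ⟨1, one_ne_zero, by simp⟩

lemma Unimodular.mul {ι : Type*} [Fintype ι] [DecidableEq ι]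
    {A B : Matrix ι ι (Polynomial F)} (hA : Unimodular A) (hB : Unimodular B) :
    Unimodular (A * B) := by
  obtain ⟨a, ha, hda⟩ := hA
  obtain ⟨b, hb, hdb⟩ := hB
  exact ⟨a * b, mul_ne_zero ha hb, by rw [Matrix.det_mul, hda, hdb, Polynomial.C_mul]⟩

lemma Unimodular.isUnit_det {ι : Type*} [Fintype ι] [DecidableEq ι]
    {A : Matrix ι ι (Polynomial F)} (hA : Unimodular A) : IsUnit A.det := by
  obtain ⟨a, ha, hda⟩ := hA
  rw [hda]
  exact Polynomial.isUnit_C.mpr (isUnit_iff_ne_zero.mpr ha)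

lemma Unimodular.inv {ι : Type*} [Fintype ι] [DecidableEq ι]
    {A : Matrix ι ι (Polynomial F)} (hA : Unimodular A) : Unimodular A⁻¹ := by
  have hunit := hA.isUnit_det
  obtain ⟨a, ha, hda⟩ := hA
  refine ⟨a⁻¹, inv_ne_zero ha, ?_⟩
  have h1 : A⁻¹ * A = 1 := Matrix.nonsing_inv_mul _ hunit
  have h2 : A⁻¹.det * A.det = 1 := by rw [← Matrix.det_mul, h1, Matrix.det_one]
  have h3 : (Polynomial.C a) * (Polynomial.C a⁻¹) = 1 := by
    rw [← Polynomial.C_mul, mul_inv_cancel₀ ha, Polynomial.C_1]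
  calc A⁻¹.det = A⁻¹.det * (Polynomial.C a * Polynomial.C a⁻¹) := by rw [h3, mul_one]
    _ = (A⁻¹.det * A.det) * Polynomial.C a⁻¹ := by rw [hda]; ring
    _ = Polynomial.C a⁻¹ := by rw [h2, one_mul]

lemma Unimodular.transpose {ι : Type*} [Fintype ι] [DecidableEq ι]
    {A : Matrix ι ι (Polynomial F)} (hA : Unimodular A) : Unimodular Aᵀ := by
  obtain ⟨a, ha, hda⟩ := hA
  exact ⟨a, ha, by rw [Matrix.det_transpose, hda]⟩

lemma unimodular_fromBlocks_zero₂₁ {ι κ : Type*} [Fintype ι] [DecidableEq ι]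
    [Fintype κ] [DecidableEq κ] {A : Matrix ι ι (Polynomial F)}
    {B : Matrix ι κ (Polynomial F)} {D : Matrix κ κ (Polynomial F)}
    (hA : Unimodular A) (hD : Unimodular D) :
    Unimodular (Matrix.fromBlocks A B 0 D) := by
  obtain ⟨a, ha, hda⟩ := hA
  obtain ⟨d, hd, hdd⟩ := hD
  exact ⟨a * d, mul_ne_zero ha hd,
    by rw [Matrix.det_fromBlocks_zero₂₁, hda, hdd, Polynomial.C_mul]⟩

lemma unimodular_fromBlocks_zero₁₂ {ι κ : Type*} [Fintype ι] [DecidableEq ι]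
    [Fintype κ] [DecidableEq κ] {A : Matrix ι ι (Polynomial F)}
    {C : Matrix κ ι (Polynomial F)} {D : Matrix κ κ (Polynomial F)}
    (hA : Unimodular A) (hD : Unimodular D) :
    Unimodular (Matrix.fromBlocks A 0 C D) := by
  obtain ⟨a, ha, hda⟩ := hA
  obtain ⟨d, hd, hdd⟩ := hD
  exact ⟨a * d, mul_ne_zero ha hd,
    by rw [Matrix.det_fromBlocks_zero₁₂, hda, hdd, Polynomial.C_mul]⟩

/-- row index equiv -/
def rowEquiv (a b : ℕ) : (Fin (a+1) ⊕ Fin b) ≃ (Fin (a+b) ⊕ Fin 1) :=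
  ((finSumFinEquiv (m := a) (n := 1)).symm.sumCongr (Equiv.refl (Fin b))).trans <|
  (Equiv.sumAssoc _ _ _).trans <|
  ((Equiv.refl (Fin a)).sumCongr (Equiv.sumComm (Fin 1) (Fin b))).trans <|
  (Equiv.sumAssoc (Fin a) (Fin b) (Fin 1)).symm.trans <|
  (finSumFinEquiv.sumCongr (Equiv.refl (Fin 1)))

/-- column index equiv -/
def colEquiv (a b : ℕ) : (Fin (b+1) ⊕ Fin a) ≃ (Fin (a+b) ⊕ Fin 1) :=
  ((finSumFinEquiv (m := b) (n := 1)).symm.sumCongr (Equiv.refl (Fin a))).trans <|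
  (Equiv.sumAssoc _ _ _).trans <|
  ((Equiv.refl (Fin b)).sumCongr (Equiv.sumComm (Fin 1) (Fin a))).trans <|
  (Equiv.sumAssoc (Fin b) (Fin a) (Fin 1)).symm.trans <|
  (((Equiv.sumComm (Fin b) (Fin a)).trans finSumFinEquiv).sumCongr (Equiv.refl (Fin 1)))

lemma rowEquiv_castSucc {a b : ℕ} (j : Fin a) :
    rowEquiv a b (Sum.inl (Fin.castSucc j)) = Sum.inl (Fin.castAdd b j) := by
  have : Fin.castSucc j = Fin.castAdd 1 j := rfl
  simp [rowEquiv, this]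

lemma rowEquiv_last {a b : ℕ} :
    rowEquiv a b (Sum.inl (Fin.last a)) = Sum.inr 0 := by
  have : Fin.last a = Fin.natAdd a (0 : Fin 1) := by ext; simp
  simp [rowEquiv, this]

lemma rowEquiv_inr {a b : ℕ} (l : Fin b) :
    rowEquiv a b (Sum.inr l) = Sum.inl (Fin.natAdd a l) := by
  simp [rowEquiv]

lemma colEquiv_castSucc {a b : ℕ} (l : Fin b) :
    colEquiv a b (Sum.inl (Fin.castSucc l)) = Sum.inl (Fin.natAdd a l) := by
  have : Fin.castSucc l = Fin.castAdd 1 l := rfl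
  simp [colEquiv, this]

lemma colEquiv_last {a b : ℕ} :
    colEquiv a b (Sum.inl (Fin.last b)) = Sum.inr 0 := by
  have : Fin.last b = Fin.natAdd b (0 : Fin 1) := by ext; simp
  simp [colEquiv, this]

lemma colEquiv_inr {a b : ℕ} (j : Fin a) :
    colEquiv a b (Sum.inr j) = Sum.inl (Fin.castAdd b j) := by
  simp [colEquiv]

lemma main_aux (ε η : ℕ) (πφ : Fin (ε+1) → Polynomial F) (πψ : Fin (η+1) → Polynomial F)
    (Lφ : Matrix (Fin ε) (Fin (ε+1)) (Polynomial F))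
    (Lψ : Matrix (Fin η) (Fin (η+1)) (Polynomial F))
    (p q : Fin (ε+1) → F) (r s : Fin (η+1) → F)
    (Uφ : Matrix (Fin (ε+1)) (Fin (ε+1)) (Polynomial F))
    (Uψ : Matrix (Fin (η+1)) (Fin (η+1)) (Polynomial F))
    (hUφu : Unimodular Uφ) (hUψu : Unimodular Uψ)
    (hUφrows : ∀ i : Fin ε, Uφ (Fin.castSucc i) = Lφ i)
    (hUψrows : ∀ i : Fin η, Uψ (Fin.castSucc i) = Lψ i)
    (hUφπ : Uφ.mulVec πφ = (fun i => if i = Fin.last ε then 1 else 0))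
    (hUψπ : Uψ.mulVec πψ = (fun i => if i = Fin.last η then 1 else 0)) :
    IsLinearization
      (Matrix.fromBlocks
        (Matrix.of fun i j => (C (p i * s j + q i * r j) : Polynomial F)) Lφᵀ Lψ 0)
      !![(∑ i, C (p i) * πφ i) * (∑ j, C (s j) * πψ j) +
         (∑ i, C (q i) * πφ i) * (∑ j, C (r j) * πψ j)] := by
  classical
  have hVφ1 : Uφ * Uφ⁻¹ = 1 := Matrix.mul_nonsing_inv _ hUφu.isUnit_det
  have hVφ2 : Uφ⁻¹ * Uφ = 1 := Matrix.nonsing_inv_mul _ hUφu.isUnit_det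
  have hVψ1 : Uψ * Uψ⁻¹ = 1 := Matrix.mul_nonsing_inv _ hUψu.isUnit_det
  have hVψ2 : Uψ⁻¹ * Uψ = 1 := Matrix.nonsing_inv_mul _ hUψu.isUnit_det
  set Vφ := Uφ⁻¹ with hVφdef
  set Vψ := Uψ⁻¹ with hVψdef
  have hVφcol : ∀ i, Vφ i (Fin.last ε) = πφ i := by
    intro i
    have h1 : Vφ.mulVec (Uφ.mulVec πφ) = πφ := by
      rw [Matrix.mulVec_mulVec, hVφ2, Matrix.one_mulVec]
    have h2 := congrFun h1 i
    rw [hUφπ] at h2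
    simp only [Matrix.mulVec, dotProduct, mul_ite, mul_one, mul_zero,
      Finset.sum_ite_eq'] at h2
    simpa using h2
  have hVψcol : ∀ i, Vψ i (Fin.last η) = πψ i := by
    intro i
    have h1 : Vψ.mulVec (Uψ.mulVec πψ) = πψ := by
      rw [Matrix.mulVec_mulVec, hVψ2, Matrix.one_mulVec]
    have h2 := congrFun h1 i
    rw [hUψπ] at h2
    simp only [Matrix.mulVec, dotProduct, mul_ite, mul_one, mul_zero,
      Finset.sum_ite_eq'] at h2
    simpa using h2
  set A : Matrix (Fin (ε+1)) (Fin (η+1)) (Polynomial F) :=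
    Matrix.of fun i j => C (p i * s j + q i * r j) with hA
  set B : Matrix (Fin (ε+1)) (Fin (η+1)) (Polynomial F) := Vφᵀ * A * Vψ with hB
  set J : Matrix (Fin (ε+1)) (Fin ε) (Polynomial F) := Vφᵀ * Lφᵀ with hJdef
  set K : Matrix (Fin η) (Fin (η+1)) (Polynomial F) := Lψ * Vψ with hKdef
  have hJ : ∀ a b, J a b = if a = Fin.castSucc b then 1 else 0 := by
    intro a b
    have h1 : J a b = (Uφ * Vφ) (Fin.castSucc b) a := by
      rw [hJdef, Matrix.mul_apply, Matrix.mul_apply]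
      refine Finset.sum_congr rfl fun c _ => ?_
      rw [Matrix.transpose_apply, Matrix.transpose_apply, ← hUφrows b, mul_comm]
    rw [h1, hVφ1]
    by_cases h : a = Fin.castSucc b
    · rw [if_pos h, h, Matrix.one_apply_eq]
    · rw [if_neg h, Matrix.one_apply_ne (fun hh => h hh.symm)]
  have hK : ∀ a b, K a b = if Fin.castSucc a = b then 1 else 0 := by
    intro a b
    have h1 : K a b = (Uψ * Vψ) (Fin.castSucc a) b := by
      rw [hKdef, Matrix.mul_apply, Matrix.mul_apply]
      refine Finset.sum_congr rfl fun c _ => ?_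
      rw [← hUψrows a]
    rw [h1, hVψ1]
    by_cases h : Fin.castSucc a = b
    · rw [if_pos h, h, Matrix.one_apply_eq]
    · rw [if_neg h, Matrix.one_apply_ne h]
  have hBll : B (Fin.last ε) (Fin.last η)
      = (∑ i, C (p i) * πφ i) * (∑ j, C (s j) * πψ j) +
        (∑ i, C (q i) * πφ i) * (∑ j, C (r j) * πψ j) := by
    have h1 : B (Fin.last ε) (Fin.last η) = ∑ j, (∑ i, πφ i * A i j) * πψ j := by
      rw [hB, Matrix.mul_apply]
      refine Finset.sum_congr rfl fun j _ => ?_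
      rw [hVψcol j, Matrix.mul_apply]
      congr 1
      refine Finset.sum_congr rfl fun i _ => ?_
      rw [Matrix.transpose_apply, hVφcol i]
    rw [h1, Finset.sum_mul_sum, Finset.sum_mul_sum, ← Finset.sum_add_distrib]
    simp_rw [← Finset.sum_add_distrib]
    rw [Finset.sum_comm]
    refine Finset.sum_congr rfl fun j _ => ?_
    rw [Finset.sum_mul]
    refine Finset.sum_congr rfl fun i _ => ?_
    have hAij : A i j = C (p i) * C (s j) + C (q i) * C (r j) := by
      show C (p i * s j + q i * r j) = _
      rw [Polynomial.C_add, Polynomial.C_mul, Polynomial.C_mul]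
    rw [hAij]
    ring
  -- elimination matrices
  set D : Matrix (Fin (ε+1)) (Fin η) (Polynomial F) :=
    Matrix.of (fun i l => if i = Fin.last ε then -(B i (Fin.castSucc l)) else 0) with hD
  set Cm : Matrix (Fin ε) (Fin (η+1)) (Polynomial F) :=
    Matrix.of (fun j c => -(B (Fin.castSucc j) c)) with hCm
  set E₂ : Matrix (Fin (ε+1) ⊕ Fin η) (Fin (ε+1) ⊕ Fin η) (Polynomial F) :=
    Matrix.fromBlocks 1 D 0 1 with hE₂
  set E₁ : Matrix (Fin (ε+1) ⊕ Fin η) (Fin (ε+1) ⊕ Fin η) (Polynomial F) :=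
    Matrix.fromBlocks Vφᵀ 0 0 1 with hE₁
  set G₁ : Matrix (Fin (η+1) ⊕ Fin ε) (Fin (η+1) ⊕ Fin ε) (Polynomial F) :=
    Matrix.fromBlocks Vψ 0 0 1 with hG₁
  set G₂ : Matrix (Fin (η+1) ⊕ Fin ε) (Fin (η+1) ⊕ Fin ε) (Polynomial F) :=
    Matrix.fromBlocks 1 0 Cm 1 with hG₂
  set Bf : Matrix (Fin (ε+1)) (Fin (η+1)) (Polynomial F) := B + D * K + J * Cm with hBfdef
  have hM : (E₂ * E₁) * (Matrix.fromBlocks A Lφᵀ Lψ 0) * (G₁ * G₂)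
      = Matrix.fromBlocks Bf J K 0 := by
    have s1 : E₂ * E₁ = Matrix.fromBlocks Vφᵀ D 0 1 := by
      rw [hE₂, hE₁, Matrix.fromBlocks_multiply]
      simp
    have s2 : G₁ * G₂ = Matrix.fromBlocks Vψ 0 Cm 1 := by
      rw [hG₁, hG₂, Matrix.fromBlocks_multiply]
      simp
    rw [s1, s2, Matrix.fromBlocks_multiply, Matrix.fromBlocks_multiply]
    simp only [Matrix.one_mul, Matrix.mul_one, Matrix.zero_mul, Matrix.mul_zero,
      add_zero, zero_add, Matrix.add_mul]
    rw [hBfdef, hB, hJdef, hKdef]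
    congr 1
    rw [Matrix.mul_assoc D, Matrix.mul_assoc Vφᵀ A]
  -- entries of Bf
  have hBf1 : ∀ (j : Fin ε) c, Bf (Fin.castSucc j) c = 0 := by
    intro j c
    have hdk : (D * K) (Fin.castSucc j) c = 0 := by
      rw [Matrix.mul_apply]
      refine Finset.sum_eq_zero fun l _ => ?_
      have : D (Fin.castSucc j) l = 0 := by
        show (if Fin.castSucc j = Fin.last ε then -(B (Fin.castSucc j) (Fin.castSucc l)) else 0) = 0
        rw [if_neg (Fin.castSucc_lt_last j).ne]
      rw [this, zero_mul]
    have hjc : (J * Cm) (Fin.castSucc j) c = -(B (Fin.castSucc j) c) := by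
      rw [Matrix.mul_apply]
      have : ∀ i : Fin ε, J (Fin.castSucc j) i * Cm i c
          = if j = i then -(B (Fin.castSucc i) c) else 0 := by
        intro i
        rw [hJ]
        by_cases h : j = i
        · rw [if_pos h, if_pos (by rw [h]), one_mul]
          rfl
        · rw [if_neg h, if_neg (by simpa [Fin.castSucc_inj] using h), zero_mul]
      rw [Finset.sum_congr rfl fun i _ => this i, Finset.sum_ite_eq]
      simp
    show (B + D * K + J * Cm) (Fin.castSucc j) c = 0
    simp only [Matrix.add_apply, hdk, hjc]
    ring
  have hBf2 : ∀ c, Bf (Fin.last ε) c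
      = if c = Fin.last η then B (Fin.last ε) (Fin.last η) else 0 := by
    intro c
    have hjc : (J * Cm) (Fin.last ε) c = 0 := by
      rw [Matrix.mul_apply]
      refine Finset.sum_eq_zero fun i _ => ?_
      rw [hJ, if_neg (Fin.castSucc_lt_last i).ne', zero_mul]
    have hdk : (D * K) (Fin.last ε) c
        = if c = Fin.last η then 0 else -(B (Fin.last ε) c) := by
      rw [Matrix.mul_apply]
      have h1 : ∀ l : Fin η, D (Fin.last ε) l * K l c
          = if Fin.castSucc l = c then -(B (Fin.last ε) (Fin.castSucc l)) else 0 := by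
        intro l
        rw [hK]
        have : D (Fin.last ε) l = -(B (Fin.last ε) (Fin.castSucc l)) := by
          show (if Fin.last ε = Fin.last ε then -(B (Fin.last ε) (Fin.castSucc l)) else 0) = _
          rw [if_pos rfl]
        rw [this]
        by_cases h : Fin.castSucc l = c
        · rw [if_pos h, if_pos h, mul_one]
        · rw [if_neg h, if_neg h, mul_zero]
      rw [Finset.sum_congr rfl fun l _ => h1 l]
      refine Fin.lastCases ?_ (fun l₀ => ?_) c
      · rw [if_pos rfl]
        refine Finset.sum_eq_zero fun l _ => ?_
        rw [if_neg (Fin.castSucc_lt_last l).ne]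
      · rw [if_neg (Fin.castSucc_lt_last l₀).ne]
        have h2 : ∀ l : Fin η, (if Fin.castSucc l = Fin.castSucc l₀
            then -(B (Fin.last ε) (Fin.castSucc l)) else 0)
            = if l = l₀ then -(B (Fin.last ε) (Fin.castSucc l₀)) else 0 := by
          intro l
          by_cases h : l = l₀
          · rw [if_pos (by rw [h]), if_pos h, h]
          · rw [if_neg (by simpa [Fin.castSucc_inj] using h), if_neg h]
        rw [Finset.sum_congr rfl fun l _ => h2 l, Finset.sum_ite_eq']
        simp
    show (B + D * K + J * Cm) (Fin.last ε) c = _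
    simp only [Matrix.add_apply, hdk, hjc]
    refine Fin.lastCases ?_ (fun l₀ => ?_) c
    · rw [if_pos rfl, if_pos rfl]
      ring
    · rw [if_neg (Fin.castSucc_lt_last l₀).ne, if_neg (Fin.castSucc_lt_last l₀).ne]
      ring
  -- assemble the linearization
  refine ⟨0, ε + η, Matrix.fromBlocks 1 0 0 (E₂ * E₁), Matrix.fromBlocks 1 0 0 (G₁ * G₂),
    (Equiv.emptySum (Fin 0) _).trans (rowEquiv ε η),
    (Equiv.emptySum (Fin 0) _).trans (colEquiv ε η), ?_, ?_, ?_⟩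
  · refine unimodular_fromBlocks_zero₂₁ unimodular_one ?_
    refine Unimodular.mul ?_ ?_
    · rw [hE₂]
      exact unimodular_fromBlocks_zero₂₁ unimodular_one unimodular_one
    · rw [hE₁]
      exact unimodular_fromBlocks_zero₂₁ (hUφu.inv.transpose) unimodular_one
  · refine unimodular_fromBlocks_zero₂₁ unimodular_one ?_
    refine Unimodular.mul ?_ ?_
    · rw [hG₁]
      exact unimodular_fromBlocks_zero₁₂ (hUψu.inv) unimodular_one
    · rw [hG₂]
      exact unimodular_fromBlocks_zero₁₂ unimodular_one unimodular_one
  · have hprod : (Matrix.fromBlocks (1 : Matrix (Fin 0) (Fin 0) (Polynomial F)) 0 0 (E₂ * E₁) :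
            Matrix (Fin 0 ⊕ (Fin (ε+1) ⊕ Fin η)) (Fin 0 ⊕ (Fin (ε+1) ⊕ Fin η)) (Polynomial F))
        * (Matrix.fromBlocks 1 0 0 (Matrix.fromBlocks A Lφᵀ Lψ 0) :
            Matrix (Fin 0 ⊕ (Fin (ε+1) ⊕ Fin η)) (Fin 0 ⊕ (Fin (η+1) ⊕ Fin ε)) (Polynomial F))
        * (Matrix.fromBlocks 1 0 0 (G₁ * G₂) :
            Matrix (Fin 0 ⊕ (Fin (η+1) ⊕ Fin ε)) (Fin 0 ⊕ (Fin (η+1) ⊕ Fin ε)) (Polynomial F))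
        = (Matrix.fromBlocks 1 0 0 (Matrix.fromBlocks Bf J K 0) :
            Matrix (Fin 0 ⊕ (Fin (ε+1) ⊕ Fin η)) (Fin 0 ⊕ (Fin (η+1) ⊕ Fin ε)) (Polynomial F)) := by
      rw [Matrix.fromBlocks_multiply, Matrix.fromBlocks_multiply]
      simp only [Matrix.one_mul, Matrix.mul_one, Matrix.zero_mul, Matrix.mul_zero,
        add_zero, zero_add]
      rw [hM]
    rw [hprod]
    ext a b
    simp only [Matrix.reindex_apply, Matrix.submatrix_apply, Equiv.symm_symm,
      Equiv.trans_apply]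
    rcases a with a0 | a
    · exact a0.elim0
    rcases b with b0 | b
    · exact b0.elim0
    rw [show (Equiv.emptySum (Fin 0) (Fin (ε+1) ⊕ Fin η)) (Sum.inr a) = a from rfl,
      show (Equiv.emptySum (Fin 0) (Fin (η+1) ⊕ Fin ε)) (Sum.inr b) = b from rfl,
      Matrix.fromBlocks_apply₂₂]
    rcases a with i | l
    · refine Fin.lastCases ?_ (fun j => ?_) i
      · -- row = last ε
        rcases b with c | j'
        · refine Fin.lastCases ?_ (fun l₀ => ?_) c
          · rw [Matrix.fromBlocks_apply₁₁, hBf2, if_pos rfl, rowEquiv_last, colEquiv_last,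
              Matrix.fromBlocks_apply₂₂, hBll]
            simp
          · rw [Matrix.fromBlocks_apply₁₁, hBf2, if_neg (Fin.castSucc_lt_last l₀).ne,
              rowEquiv_last, colEquiv_castSucc, Matrix.fromBlocks_apply₂₁]
            simp
        · rw [Matrix.fromBlocks_apply₁₂, hJ, if_neg (Fin.castSucc_lt_last j').ne',
            rowEquiv_last, colEquiv_inr, Matrix.fromBlocks_apply₂₁]
          simp
      · -- row = castSucc j
        rcases b with c | j'
        · refine Fin.lastCases ?_ (fun l₀ => ?_) c
          · rw [Matrix.fromBlocks_apply₁₁, hBf1, rowEquiv_castSucc, colEquiv_last,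
              Matrix.fromBlocks_apply₁₂]
            simp
          · rw [Matrix.fromBlocks_apply₁₁, hBf1, rowEquiv_castSucc, colEquiv_castSucc,
              Matrix.fromBlocks_apply₁₁]
            rw [Matrix.one_apply, if_neg]
            intro h
            have := congrArg Fin.val h
            simp only [Fin.coe_castAdd, Fin.coe_natAdd] at this
            omega
        · rw [Matrix.fromBlocks_apply₁₂, hJ, rowEquiv_castSucc, colEquiv_inr,
            Matrix.fromBlocks_apply₁₁, Matrix.one_apply]
          by_cases h : j = j'
          · rw [if_pos (by rw [h]), if_pos (by rw [h])]
          · rw [if_neg (by simpa [Fin.castSucc_inj] using h), if_neg]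
            intro hh
            apply h
            have := congrArg Fin.val hh
            simpa [Fin.ext_iff, Fin.coe_castAdd] using this
    · rcases b with c | j'
      · refine Fin.lastCases ?_ (fun l₀ => ?_) c
        · rw [Matrix.fromBlocks_apply₂₁, hK, if_neg (Fin.castSucc_lt_last l).ne,
            rowEquiv_inr, colEquiv_last, Matrix.fromBlocks_apply₁₂]
          simp
        · rw [Matrix.fromBlocks_apply₂₁, hK, rowEquiv_inr, colEquiv_castSucc,
            Matrix.fromBlocks_apply₁₁, Matrix.one_apply]
          by_cases h : l = l₀
          · rw [if_pos (by rw [h]), if_pos (by rw [h])]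
          · rw [if_neg (by simpa [Fin.castSucc_inj] using h), if_neg]
            intro hh
            apply h
            have := congrArg Fin.val hh
            simp only [Fin.coe_natAdd] at this
            exact Fin.ext (by omega)
      · rw [Matrix.fromBlocks_apply₂₂, rowEquiv_inr, colEquiv_inr,
          Matrix.fromBlocks_apply₁₁, Matrix.one_apply, if_neg]
        · simp
        · intro h
          have := congrArg Fin.val h
          simp only [Fin.coe_natAdd, Fin.coe_castAdd] at this
          omega

/-- Linearization of `t(λ) = p(λ)s(λ) + q(λ)r(λ)` where `p, q` are expressed
in a basis `φ` of the polynomials of degree at most `ε` and `r, s` in a basis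
`ψ` of the polynomials of degree at most `η`. -/
theorem statement10 (ε η : ℕ)
    (φ : Fin (ε + 1) → Polynomial F) (ψ : Fin (η + 1) → Polynomial F)
    (hφdeg : ∀ i, (φ i).degree ≤ (ε : ℕ)) (hφind : LinearIndependent F φ)
    (hψdeg : ∀ i, (ψ i).degree ≤ (η : ℕ)) (hψind : LinearIndependent F ψ)
    (Lφ : Matrix (Fin ε) (Fin (ε + 1)) (Polynomial F))
    (Lψ : Matrix (Fin η) (Fin (η + 1)) (Polynomial F))
    (hφ : IsDualBasis Lφ fun i => φ i.rev)
    (hψ : IsDualBasis Lψ fun i => ψ i.rev)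
    (p q : Fin (ε + 1) → F) (r s : Fin (η + 1) → F) :
    let pP : Polynomial F := ∑ i, Polynomial.C (p i) * φ i.rev
    let qP : Polynomial F := ∑ i, Polynomial.C (q i) * φ i.rev
    let rP : Polynomial F := ∑ i, Polynomial.C (r i) * ψ i.rev
    let sP : Polynomial F := ∑ i, Polynomial.C (s i) * ψ i.rev
    IsLinearization
      (Matrix.fromBlocks
        (Matrix.of fun (i : Fin (ε + 1)) (j : Fin (η + 1)) =>
          (Polynomial.C (p i * s j + q i * r j) : Polynomial F))
        Lφᵀ Lψ 0)
      !![pP * sP + qP * rP] := by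
  intro pP qP rP sP
  obtain ⟨Uφ, hUφu, hUφrows, hUφπ⟩ :=
    dual_basis_completion Lφ (fun i => φ i.rev) hφ.1 hφ.2.1 (hφ.2.2 0)
      (fun i => hφdeg _) (hφind.comp Fin.rev Fin.rev_injective)
  obtain ⟨Uψ, hUψu, hUψrows, hUψπ⟩ :=
    dual_basis_completion Lψ (fun i => ψ i.rev) hψ.1 hψ.2.1 (hψ.2.2 0)
      (fun i => hψdeg _) (hψind.comp Fin.rev Fin.rev_injective)
  exact main_aux ε η (fun i => φ i.rev) (fun i => ψ i.rev) Lφ Lψ p q r s Uφ Uψ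
    hUφu hUψu hUφrows hUψrows hUφπ hUψπ

end PaperLin
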